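/- Let F : ℝ → ℂ be square-integrable and let 0 < H ≤ X. Then ∫_X^{2X} |F(x+H) − F(x)|² dx ≪ sup_{θ ∈ [H/(3X), 3H/X]} ∫_X^{3X} |F(u + θu) − F(u)|² du, with an absolute implied constant. -/

import Mathlib

open MeasureTheory Set ENNReal

noncomputable def eN (z : ℂ) : ℝ≥0∞ := (‖z‖₊ : ℝ≥0∞) ^ 2

lemma measurable_eN : Measurable eN :=
  (measurable_coe_nnreal_ennreal.comp measurable_nnnorm).pow_const 2

lemma eN_eq_ofReal (z : ℂ) : eN z = ENNReal.ofReal (‖z‖ ^ 2) := by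
  rw [eN, ← ENNReal.ofReal_coe_nnreal, coe_nnnorm, ← ENNReal.ofReal_pow (norm_nonneg _)]

lemma eN_tri (p q r : ℂ) : eN (p - q) ≤ 2 * eN (r - q) + 2 * eN (r - p) := by
  simp only [eN_eq_ofReal]
  rw [show (2:ℝ≥0∞) = ENNReal.ofReal 2 by simp, ← ENNReal.ofReal_mul (by norm_num),
    ← ENNReal.ofReal_mul (by norm_num), ← ENNReal.ofReal_add (by positivity) (by positivity)]
  apply ENNReal.ofReal_le_ofReal
  have h1 : ‖p - q‖ ≤ ‖r - q‖ + ‖r - p‖ := by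
    calc ‖p - q‖ = ‖(r - q) - (r - p)‖ := by ring_nf
    _ ≤ ‖r - q‖ + ‖r - p‖ := norm_sub_le _ _
  nlinarith [norm_nonneg (p - q), norm_nonneg (r - q), norm_nonneg (r - p),
    sq_nonneg (‖r - q‖ - ‖r - p‖), sq_nonneg (‖r - q‖ + ‖r - p‖)]

lemma eN_sub (p q : ℂ) : eN (p - q) ≤ 2 * eN p + 2 * eN q := by
  simp only [eN_eq_ofReal]
  rw [show (2:ℝ≥0∞) = ENNReal.ofReal 2 by simp, ← ENNReal.ofReal_mul (by norm_num),
    ← ENNReal.ofReal_mul (by norm_num), ← ENNReal.ofReal_add (by positivity) (by positivity)]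
  apply ENNReal.ofReal_le_ofReal
  have h1 : ‖p - q‖ ≤ ‖p‖ + ‖q‖ := norm_sub_le _ _
  nlinarith [norm_nonneg (p - q), norm_nonneg p, norm_nonneg q, sq_nonneg (‖p‖ - ‖q‖),
    sq_nonneg (‖p‖ + ‖q‖)]

lemma lint_comp_affine (f : ℝ → ℝ≥0∞) (hf : Measurable f) {k : ℝ} (hk : k ≠ 0) (m : ℝ) :
    ∫⁻ x, f (k * x + m) = ENNReal.ofReal |k|⁻¹ * ∫⁻ x, f x := by
  have hφ : Measurable fun x : ℝ => k * x + m := (measurable_id.const_mul k).add_const m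
  calc ∫⁻ x, f (k * x + m)
      = ∫⁻ y, f y ∂(Measure.map (fun x => k * x + m) volume) := (lintegral_map hf hφ).symm
    _ = ENNReal.ofReal |k|⁻¹ * ∫⁻ x, f x := by
        have h : (fun x : ℝ => k * x + m) = (fun y : ℝ => y + m) ∘ (fun x : ℝ => k * x) := rfl
        rw [h, ← Measure.map_map (measurable_add_const m) (measurable_const_mul k),
          show (fun x : ℝ => k * x) = (k * ·) from rfl, Real.map_volume_mul_left hk,
          Measure.map_smul, map_add_right_eq_self volume m, lintegral_smul_measure, abs_inv, smul_eq_mul]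

lemma lint_affine_Ioc (f : ℝ → ℝ≥0∞) (hf : Measurable f) {k : ℝ} (hk : 0 < k) (m a b : ℝ) :
    ∫⁻ θ in Ioc a b, f (k * θ + m)
      = ENNReal.ofReal k⁻¹ * ∫⁻ v in Ioc (k * a + m) (k * b + m), f v := by
  have key : ∀ θ : ℝ, (Ioc a b).indicator (fun θ => f (k * θ + m)) θ
      = (Ioc (k * a + m) (k * b + m)).indicator f (k * θ + m) := by
    intro θ
    by_cases hθ : θ ∈ Ioc a b
    · rw [indicator_of_mem hθ, indicator_of_mem]
      obtain ⟨h1, h2⟩ := hθ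
      exact ⟨by nlinarith, by nlinarith⟩
    · rw [indicator_of_notMem hθ, indicator_of_notMem]
      intro hmem
      obtain ⟨h1, h2⟩ := hmem
      exact hθ ⟨by nlinarith, by nlinarith⟩
  rw [← lintegral_indicator measurableSet_Ioc, ← lintegral_indicator measurableSet_Ioc]
  simp_rw [key]
  rw [lint_comp_affine _ (hf.indicator measurableSet_Ioc) (ne_of_gt hk) m, abs_of_pos hk]

lemma qmp_mul {k : ℝ} (hk : k ≠ 0) :
    Measure.QuasiMeasurePreserving (fun x : ℝ => k * x) volume volume := by
  refine ⟨measurable_const_mul k, ?_⟩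
  rw [show (fun x : ℝ => k * x) = (k * ·) from rfl, Real.map_volume_mul_left hk]
  exact Measure.smul_absolutelyContinuous

/-- For square-integrable `F` and `0 < H ≤ X`,
`∫_X^{2X} |F(x+H) − F(x)|² dx ≪ sup_{θ ∈ [H/(3X), 3H/X]} ∫_X^{3X} |F(u+θu) − F(u)|² du`
with an absolute implied constant. -/
theorem shift_to_dilation :
    ∃ C > 0, ∀ (F : ℝ → ℂ), MemLp F 2 (volume : Measure ℝ) →
      ∀ X H : ℝ, 0 < H → H ≤ X → 0 < X →
        (∫ x in X..(2 * X), ‖F (x + H) - F x‖ ^ 2)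
          ≤ C * ⨆ θ ∈ Set.Icc (H / (3 * X)) (3 * H / X),
              ∫ u in X..(3 * X), ‖F (u + θ * u) - F u‖ ^ 2 := by
  refine ⟨34, by norm_num, ?_⟩
  intro F hF X H hH hHX hX
  obtain ⟨G, hGsm, hFG⟩ := hF.1
  have hGmeas : Measurable G := hGsm.measurable
  have hG : MemLp G 2 volume := hF.ae_eq hFG
  set c : ℝ := H / (3 * X) with hc
  set d : ℝ := 3 * H / X with hd
  have hc0 : 0 < c := by positivity
  have hcd : c ≤ d := by
    rw [hc, hd, div_le_div_iff₀ (by positivity) (by positivity)]; nlinarith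
  -- replace F by the measurable representative G
  have hLHS_eq : (∫ x in X..(2*X), ‖F (x + H) - F x‖ ^ 2)
      = ∫ x in X..(2*X), ‖G (x + H) - G x‖ ^ 2 := by
    apply intervalIntegral.integral_congr_ae
    have h1 : (fun x : ℝ => F (x + H)) =ᵐ[volume] (fun x => G (x + H)) :=
      (measurePreserving_add_right volume H).quasiMeasurePreserving.ae_eq_comp hFG
    filter_upwards [h1, hFG] with x h1x h2x _
    rw [h1x, h2x]
  have hIeq : ∀ θ : ℝ, 0 < θ → (∫ u in X..(3*X), ‖F (u + θ * u) - F u‖ ^ 2)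
      = ∫ u in X..(3*X), ‖G (u + θ * u) - G u‖ ^ 2 := by
    intro θ hθ
    apply intervalIntegral.integral_congr_ae
    have h1 : (fun u : ℝ => F ((1 + θ) * u)) =ᵐ[volume] (fun u => G ((1 + θ) * u)) :=
      (qmp_mul (k := 1 + θ) (by positivity)).ae_eq_comp hFG
    have h2 : (fun u : ℝ => F (u + θ * u)) =ᵐ[volume] (fun u => G (u + θ * u)) := by
      have : ∀ u : ℝ, u + θ * u = (1 + θ) * u := fun u => by ring
      simp_rw [this]; exact h1
    filter_upwards [h2, hFG] with u h1u h2u _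
    rw [h1u, h2u]
  have hSup_eq : (⨆ θ ∈ Set.Icc c d, ∫ u in X..(3*X), ‖F (u + θ * u) - F u‖ ^ 2)
      = ⨆ θ ∈ Set.Icc c d, ∫ u in X..(3*X), ‖G (u + θ * u) - G u‖ ^ 2 := by
    apply iSup_congr
    intro θ
    by_cases hθ : θ ∈ Set.Icc c d
    · rw [ciSup_pos hθ, ciSup_pos hθ]
      exact hIeq θ (lt_of_lt_of_le hc0 hθ.1)
    · haveI : IsEmpty (θ ∈ Set.Icc c d) := by simpa using hθ
      rw [Real.iSup_of_isEmpty, Real.iSup_of_isEmpty]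
  rw [hLHS_eq, hSup_eq]
  clear hLHS_eq hSup_eq hIeq hFG hGsm hF F
  -- notation
  set IG : ℝ → ℝ := fun θ => ∫ u in X..(3*X), ‖G (u + θ * u) - G u‖ ^ 2 with hIGdef
  set S : ℝ := ⨆ θ ∈ Set.Icc c d, IG θ with hSdef
  set M : ℝ≥0∞ := ∫⁻ u, eN (G u) with hMdef
  have hM : M ≠ ∞ := by
    have h := lintegral_rpow_enorm_lt_top_of_eLpNorm_lt_top (p := 2) (μ := volume) (f := G)
      (by norm_num) (by norm_num) hG.2
    have heq : (∫⁻ u, eN (G u)) = ∫⁻ a, (‖G a‖₊ : ℝ≥0∞) ^ (2 : ℝ≥0∞).toReal := by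
      apply lintegral_congr
      intro u
      rw [eN, ENNReal.toReal_ofNat, ← ENNReal.rpow_natCast]
      norm_num
    rw [hMdef, heq]
    exact h.ne
  -- scaling bound
  have hscale : ∀ (s : Set ℝ) (k m : ℝ), 1 ≤ k → (∫⁻ x in s, eN (G (k * x + m))) ≤ M := by
    intro s k m hk
    calc (∫⁻ x in s, eN (G (k * x + m))) ≤ ∫⁻ x, eN (G (k * x + m)) :=
          lintegral_mono' Measure.restrict_le_self le_rfl
      _ = ENNReal.ofReal |k|⁻¹ * M :=
          lint_comp_affine (fun v => eN (G v)) (measurable_eN.comp hGmeas) (by linarith) m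
      _ ≤ 1 * M := by
          gcongr
          apply ENNReal.ofReal_le_one.mpr
          rw [abs_of_pos (by linarith)]
          exact inv_le_one_of_one_le₀ hk
      _ = M := one_mul M
  set L3 : ℝ → ℝ≥0∞ := fun θ => ∫⁻ u in Ioc X (3*X), eN (G (u + θ * u) - G u) with hL3def
  have hmeasθ : ∀ θ : ℝ, Measurable fun u : ℝ => eN (G (u + θ * u) - G u) := fun θ =>
    measurable_eN.comp ((hGmeas.comp (measurable_id.add (measurable_id.const_mul θ))).sub hGmeas)
  have hL3top : ∀ θ : ℝ, 0 ≤ θ → L3 θ ≤ 4 * M := by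
    intro θ hθ
    have hrw : ∀ u : ℝ, u + θ * u = (1 + θ) * u + 0 := fun u => by ring
    calc L3 θ ≤ ∫⁻ u in Ioc X (3*X), (2 * eN (G ((1 + θ) * u + 0)) + 2 * eN (G u)) := by
          apply lintegral_mono
          intro u
          simpa [← hrw u] using eN_sub (G ((1 + θ) * u + 0)) (G u)
      _ = 2 * (∫⁻ u in Ioc X (3*X), eN (G ((1 + θ) * u + 0)))
            + 2 * ∫⁻ u in Ioc X (3*X), eN (G u) := by
          rw [lintegral_add_left]
          · rw [lintegral_const_mul' 2 _ (by norm_num), lintegral_const_mul' 2 _ (by norm_num)]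
          · exact (measurable_eN.comp (hGmeas.comp
              ((measurable_id.const_mul (1+θ)).add_const 0))).const_mul 2
      _ ≤ 2 * M + 2 * M := by
          gcongr
          · exact hscale _ _ _ (by linarith)
          · have := hscale (Ioc X (3*X)) 1 0 le_rfl
            simpa using this
      _ = 4 * M := by ring
  have hIG_eq : ∀ θ : ℝ, IG θ = (L3 θ).toReal := by
    intro θ
    rw [hIGdef]
    simp only
    rw [intervalIntegral.integral_of_le (by linarith)]
    rw [integral_eq_lintegral_of_nonneg_ae]
    · congr 1
      apply lintegral_congr
      intro u
      rw [eN_eq_ofReal]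
    · exact Filter.Eventually.of_forall fun u => by positivity
    · exact (((hGmeas.comp (measurable_id.add (measurable_id.const_mul θ))).sub
        hGmeas).norm.pow_const 2).aestronglyMeasurable
  -- S bounds
  have hIG_nonneg : ∀ θ : ℝ, 0 ≤ IG θ := fun θ => by rw [hIG_eq]; exact ENNReal.toReal_nonneg
  have hTle : ∀ θ : ℝ, (⨆ _ : θ ∈ Set.Icc c d, IG θ) ≤ (4 * M).toReal := by
    intro θ
    by_cases hθ : θ ∈ Set.Icc c d
    · rw [ciSup_pos hθ]
      rw [hIG_eq]
      exact ENNReal.toReal_mono (ENNReal.mul_ne_top (by norm_num) hM) (hL3top θ (le_of_lt (lt_of_lt_of_le hc0 hθ.1)))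
    · haveI : IsEmpty (θ ∈ Set.Icc c d) := by simpa using hθ
      rw [Real.iSup_of_isEmpty]
      exact ENNReal.toReal_nonneg
  have hbdd : BddAbove (Set.range fun θ : ℝ => ⨆ _ : θ ∈ Set.Icc c d, IG θ) := by
    refine ⟨(4 * M).toReal, ?_⟩
    rintro x ⟨θ, rfl⟩
    exact hTle θ
  have hIG_le_S : ∀ θ ∈ Set.Icc c d, IG θ ≤ S := by
    intro θ hθ
    rw [hSdef]
    have h := le_ciSup hbdd θ
    rwa [ciSup_pos hθ] at h
  have hS0 : 0 ≤ S := by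
    rw [hSdef]
    apply Real.iSup_nonneg
    intro θ
    by_cases hθ : θ ∈ Set.Icc c d
    · rw [ciSup_pos hθ]; exact hIG_nonneg θ
    · haveI : IsEmpty (θ ∈ Set.Icc c d) := by simpa using hθ
      rw [Real.iSup_of_isEmpty]
  have hkey : ∀ θ ∈ Set.Icc c d, L3 θ ≤ ENNReal.ofReal S := by
    intro θ hθ
    have hne : L3 θ ≠ ∞ :=
      ne_top_of_le_ne_top (ENNReal.mul_ne_top (by norm_num) hM)
        (hL3top θ (le_of_lt (lt_of_lt_of_le hc0 hθ.1)))
    rw [ENNReal.le_ofReal_iff_toReal_le hne hS0, ← hIG_eq]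
    exact hIG_le_S θ hθ
    -- main chain in ℝ≥0∞
  set I1 : Set ℝ := Ioc X (2*X) with hI1
  set a' : ℝ := 11*H/(6*X) with ha'
  set b' : ℝ := 13*H/(6*X) with hb'
  set L1 : ℝ≥0∞ := ∫⁻ x in I1, eN (G (x + H) - G x) with hL1
  set B : ℝ → ℝ≥0∞ := fun θ => ∫⁻ x in I1, eN (G (x + θ * x) - G (x + H)) with hB
  set W : ℝ → ℝ≥0∞ := fun x => ∫⁻ φ in Ioc c d, eN (G ((x+H) * φ + (x+H)) - G (x+H)) with hW
  have hmeasBk : Measurable (Function.uncurry fun (θ x : ℝ) => eN (G (x + θ * x) - G (x + H))) := by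
    apply measurable_eN.comp
    exact (hGmeas.comp (measurable_snd.add (measurable_fst.mul measurable_snd))).sub
      (hGmeas.comp (measurable_snd.add_const H))
  have hBmeas : Measurable B := by
    rw [hB]; exact Measurable.lintegral_prod_right hmeasBk
  have hmeasWk : Measurable (Function.uncurry fun (x φ : ℝ) => eN (G ((x+H) * φ + (x+H)) - G (x+H))) := by
    apply measurable_eN.comp
    exact (hGmeas.comp (((measurable_fst.add_const H).mul measurable_snd).add
      (measurable_fst.add_const H))).sub (hGmeas.comp (measurable_fst.add_const H))
  have hWmeas : Measurable W := by
    rw [hW]; exact Measurable.lintegral_prod_right hmeasWk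
  have hA : ∀ θ ∈ Set.Icc c d, (∫⁻ x in I1, eN (G (x + θ * x) - G x)) ≤ ENNReal.ofReal S := by
    intro θ hθ
    refine le_trans ?_ (hkey θ hθ)
    exact lintegral_mono_set (Ioc_subset_Ioc_right (by linarith))
  have hJIcc : Ioc a' b' ⊆ Set.Icc c d := by
    intro θ hθ
    constructor
    · refine le_trans ?_ (le_of_lt hθ.1)
      rw [hc, ha', div_le_div_iff₀ (by positivity) (by positivity)]
      nlinarith
    · refine le_trans hθ.2 ?_
      rw [hb', hd, div_le_div_iff₀ (by positivity) (by positivity)]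
      nlinarith
  have hstep1 : ∀ θ ∈ Ioc a' b', L1 ≤ 2 * ENNReal.ofReal S + 2 * B θ := by
    intro θ hθ
    have htri : L1 ≤ ∫⁻ x in I1,
        (2 * eN (G (x + θ * x) - G x) + 2 * eN (G (x + θ * x) - G (x + H))) := by
      rw [hL1]
      apply lintegral_mono
      intro x
      exact eN_tri (G (x + H)) (G x) (G (x + θ * x))
    refine le_trans htri ?_
    have hsplit : (∫⁻ x in I1,
          (2 * eN (G (x + θ * x) - G x) + 2 * eN (G (x + θ * x) - G (x + H))))
        = 2 * (∫⁻ x in I1, eN (G (x + θ * x) - G x)) + 2 * B θ := by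
      rw [lintegral_add_left ((hmeasθ θ).const_mul 2),
        lintegral_const_mul' 2 _ (by norm_num), lintegral_const_mul' 2 _ (by norm_num)]
    rw [hsplit]
    gcongr
    exact hA θ (hJIcc hθ)
  have hInner : ∀ x ∈ I1, (∫⁻ θ in Ioc a' b', eN (G (x + θ * x) - G (x + H))) ≤ 2 * W x := by
    intro x hx
    have hx0 : 0 < x := hX.trans hx.1
    have hxH : 0 < x + H := by linarith
    have hfmeas : Measurable fun v : ℝ => eN (G v - G (x + H)) :=
      measurable_eN.comp (hGmeas.sub measurable_const)
    have hrw : (fun θ : ℝ => eN (G (x + θ * x) - G (x + H)))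
        = fun θ : ℝ => (fun v : ℝ => eN (G v - G (x + H))) (x * θ + x) := by
      funext θ
      simp only
      congr 2
      ring
    rw [hrw, lint_affine_Ioc _ hfmeas hx0 x a' b']
    have hsub : Ioc (x * a' + x) (x * b' + x)
        ⊆ Ioc ((x+H) * c + (x+H)) ((x+H) * d + (x+H)) := by
      apply Ioc_subset_Ioc
      · rw [hc, ha']
        have eL : (x+H) * (H/(3*X)) + (x+H) = ((x+H)*H*2 + (x+H)*(6*X)) / (6*X) := by
          field_simp
          ring
        have eR : x * (11*H/(6*X)) + x = (x*(11*H) + x*(6*X)) / (6*X) := by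
          field_simp
        rw [eL, eR, div_le_div_iff_of_pos_right (by positivity)]
        nlinarith [hx.1, hx.2, mul_lt_mul_of_pos_left hx.1 hH,
          mul_le_mul_of_nonneg_left hHX (le_of_lt hH)]
      · rw [hb', hd]
        have eL : x * (13*H/(6*X)) + x = (x*(13*H) + x*(6*X)) / (6*X) := by
          field_simp
        have eR : (x+H) * (3*H/X) + (x+H) = ((x+H)*(18*H) + (x+H)*(6*X)) / (6*X) := by
          field_simp
          ring
        rw [eL, eR, div_le_div_iff_of_pos_right (by positivity)]
        nlinarith [hx.1, hx.2, mul_lt_mul_of_pos_left hx.1 hH, mul_pos hH hX,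
          mul_le_mul_of_nonneg_left hHX (le_of_lt hH)]
    have hWx : W x = ENNReal.ofReal (x+H)⁻¹
        * ∫⁻ v in Ioc ((x+H) * c + (x+H)) ((x+H) * d + (x+H)), eN (G v - G (x+H)) := by
      rw [hW]
      exact lint_affine_Ioc _ hfmeas hxH (x+H) c d
    have hbig : (∫⁻ v in Ioc ((x+H) * c + (x+H)) ((x+H) * d + (x+H)), eN (G v - G (x+H)))
        = ENNReal.ofReal (x+H) * W x := by
      rw [hWx, ← mul_assoc, ← ENNReal.ofReal_mul (le_of_lt hxH),
        mul_inv_cancel₀ (ne_of_gt hxH), ENNReal.ofReal_one, one_mul]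
    calc ENNReal.ofReal x⁻¹ * ∫⁻ v in Ioc (x * a' + x) (x * b' + x), eN (G v - G (x+H))
        ≤ ENNReal.ofReal x⁻¹
          * ∫⁻ v in Ioc ((x+H) * c + (x+H)) ((x+H) * d + (x+H)), eN (G v - G (x+H)) := by
          gcongr
      _ = ENNReal.ofReal x⁻¹ * (ENNReal.ofReal (x+H) * W x) := by rw [hbig]
      _ = ENNReal.ofReal (x⁻¹ * (x+H)) * W x := by
          rw [← mul_assoc, ← ENNReal.ofReal_mul (by positivity)]
      _ ≤ 2 * W x := by
          gcongr
          rw [show (2:ℝ≥0∞) = ENNReal.ofReal 2 by simp]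
          apply ENNReal.ofReal_le_ofReal
          rw [inv_mul_le_iff₀ hx0]
          have : H ≤ x := le_of_lt (lt_of_le_of_lt hHX hx.1)
          linarith
  have hWsum : (∫⁻ x in I1, W x) ≤ ENNReal.ofReal S * ENNReal.ofReal (d - c) := by
    have hswap2 : (∫⁻ x in I1, W x)
        = ∫⁻ φ in Ioc c d, ∫⁻ x in I1, eN (G ((x+H) * φ + (x+H)) - G (x+H)) := by
      rw [hW]
      exact lintegral_lintegral_swap hmeasWk.aemeasurable
    rw [hswap2]
    calc (∫⁻ φ in Ioc c d, ∫⁻ x in I1, eN (G ((x+H) * φ + (x+H)) - G (x+H)))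
        ≤ ∫⁻ _ in Ioc c d, ENNReal.ofReal S := by
          apply setLIntegral_mono measurable_const
          intro φ hφ
          have hfmeas2 : Measurable fun v : ℝ => eN (G (v * φ + v) - G v) :=
            measurable_eN.comp ((hGmeas.comp
              ((measurable_id.mul_const φ).add measurable_id)).sub hGmeas)
          have hcongr : (fun x : ℝ => eN (G ((x+H) * φ + (x+H)) - G (x+H)))
              = fun x : ℝ => (fun v : ℝ => eN (G (v * φ + v) - G v)) (1 * x + H) := by
            funext x
            simp only
            norm_num
          calc (∫⁻ x in I1, eN (G ((x+H) * φ + (x+H)) - G (x+H)))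
              = ENNReal.ofReal 1⁻¹
                * ∫⁻ v in Ioc (1 * X + H) (1 * (2*X) + H), eN (G (v * φ + v) - G v) := by
                rw [hI1, hcongr]
                exact lint_affine_Ioc _ hfmeas2 one_pos H X (2*X)
            _ = ∫⁻ v in Ioc (1 * X + H) (1 * (2*X) + H), eN (G (v * φ + v) - G v) := by
                simp
            _ ≤ ∫⁻ v in Ioc X (3*X), eN (G (v * φ + v) - G v) :=
                lintegral_mono_set (Ioc_subset_Ioc (by linarith) (by linarith))
            _ = L3 φ := by
                rw [hL3def]
                apply lintegral_congr
                intro v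
                congr 2
                ring
            _ ≤ ENNReal.ofReal S := hkey φ ⟨le_of_lt hφ.1, hφ.2⟩
      _ = ENNReal.ofReal S * ENNReal.ofReal (d - c) := by
          rw [setLIntegral_const, Real.volume_Ioc]
  have hBsum : (∫⁻ θ in Ioc a' b', B θ)
      ≤ 2 * (ENNReal.ofReal S * ENNReal.ofReal (d - c)) := by
    have hswap1 : (∫⁻ θ in Ioc a' b', B θ)
        = ∫⁻ x in I1, ∫⁻ θ in Ioc a' b', eN (G (x + θ * x) - G (x + H)) := by
      rw [hB]
      exact lintegral_lintegral_swap hmeasBk.aemeasurable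
    rw [hswap1]
    calc (∫⁻ x in I1, ∫⁻ θ in Ioc a' b', eN (G (x + θ * x) - G (x + H)))
        ≤ ∫⁻ x in I1, 2 * W x := by
          apply setLIntegral_mono (hWmeas.const_mul 2)
          exact hInner
      _ = 2 * ∫⁻ x in I1, W x := lintegral_const_mul' 2 _ (by norm_num)
      _ ≤ 2 * (ENNReal.ofReal S * ENNReal.ofReal (d - c)) := by
          gcongr
  have hdc : ENNReal.ofReal (d - c) = 8 * ENNReal.ofReal (H / (3*X)) := by
    have h1 : d - c = 8 * (H / (3*X)) := by
      rw [hd, hc]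
      field_simp
      ring
    rw [h1, ENNReal.ofReal_mul (by norm_num)]
    norm_num
  have hJvol : volume (Ioc a' b') = ENNReal.ofReal (H / (3*X)) := by
    rw [Real.volume_Ioc]
    congr 1
    rw [ha', hb']
    field_simp
    ring
  have hmain : L1 * ENNReal.ofReal (H / (3*X))
      ≤ 34 * ENNReal.ofReal S * ENNReal.ofReal (H / (3*X)) := by
    calc L1 * ENNReal.ofReal (H / (3*X)) = ∫⁻ _ in Ioc a' b', L1 := by
          rw [setLIntegral_const, hJvol]
      _ ≤ ∫⁻ θ in Ioc a' b', (2 * ENNReal.ofReal S + 2 * B θ) := by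
          apply setLIntegral_mono (measurable_const.add (hBmeas.const_mul 2))
          exact hstep1
      _ = 2 * ENNReal.ofReal S * volume (Ioc a' b') + 2 * ∫⁻ θ in Ioc a' b', B θ := by
          rw [lintegral_add_left measurable_const, setLIntegral_const,
            lintegral_const_mul' 2 _ (by norm_num)]
      _ ≤ 2 * ENNReal.ofReal S * ENNReal.ofReal (H / (3*X))
            + 2 * (2 * (ENNReal.ofReal S * ENNReal.ofReal (d - c))) := by
          rw [hJvol]
          gcongr
      _ = 34 * ENNReal.ofReal S * ENNReal.ofReal (H / (3*X)) := by
          rw [hdc]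
          ring
  have hcancel : L1 ≤ 34 * ENNReal.ofReal S := by
    have ht0 : ENNReal.ofReal (H / (3*X)) ≠ 0 := (ENNReal.ofReal_pos.mpr (by positivity)).ne'
    exact (ENNReal.mul_le_mul_iff_left ht0 ENNReal.ofReal_ne_top).mp hmain
  have hLHS : (∫ x in X..(2*X), ‖G (x + H) - G x‖ ^ 2) = L1.toReal := by
    rw [intervalIntegral.integral_of_le (by linarith), integral_eq_lintegral_of_nonneg_ae]
    · rw [hL1]
      congr 1
      apply lintegral_congr
      intro x
      rw [eN_eq_ofReal]
    · exact Filter.Eventually.of_forall fun x => by positivity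
    · exact (((hGmeas.comp (measurable_id.add_const H)).sub hGmeas).norm.pow_const
        2).aestronglyMeasurable
  rw [hLHS]
  calc L1.toReal ≤ (34 * ENNReal.ofReal S).toReal :=
      ENNReal.toReal_mono (ENNReal.mul_ne_top (by norm_num) ENNReal.ofReal_ne_top) hcancel
    _ = 34 * S := by
      rw [ENNReal.toReal_mul, ENNReal.toReal_ofReal hS0]
      norm_num
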